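/- arXiv:2407.00442 — 2 statements merged into one kernel-verified Lean document; each statement's English description precedes it below -/
import Mathlib

section
/- Assume the L² stability estimate: there is a constant c > 0 such that ‖w‖_{L²(Ω)} ≤ c(‖Δw‖_{L²(Ω)} + ‖w‖_{L²(∂Ω)}) for every function w twice continuously differentiable on a neighborhood of the closure of Ω. Let u be twice continuously differentiable on a neighborhood of the closure of Ω with −Δu = f on Ω and u = g σ-almost everywhere on ∂Ω, and let u_θ be any function twice continuously differentiable on a neighborhood of the closure of Ω. Then ‖u − u_θ‖²_{L²(Ω)} ≤ 2c² max(1, 1/α) · L(u_θ). -/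
open MeasureTheory Set

noncomputable section

/-- Partial derivative in coordinate direction `i`. -/
def pder (d : ℕ) (i : Fin d) (w : (Fin d → ℝ) → ℝ) : (Fin d → ℝ) → ℝ :=
  fun x => fderiv ℝ w x (Pi.single i 1)

/-- Laplacian `Δw = Σ_i ∂²w/∂x_i²`. -/
def lap (d : ℕ) (w : (Fin d → ℝ) → ℝ) : (Fin d → ℝ) → ℝ :=
  fun x => ∑ i : Fin d, pder d i (pder d i w) x

/-- `w` is `k` times continuously differentiable on a neighborhood of `D`. -/
def CkNear (d k : ℕ) (D : Set (Fin d → ℝ)) (w : (Fin d → ℝ) → ℝ) : Prop :=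
  ∃ V, IsOpen V ∧ D ⊆ V ∧ ContDiffOn ℝ k w V

/-- The continuous PINN loss
`L(v) = ‖Δv + f‖²_{L²(Ω)} + α ‖v − g‖²_{L²(∂Ω)}`. -/
def pinnLoss (d : ℕ) (Ω : Set (Fin d → ℝ)) (σm : Measure (Fin d → ℝ))
    (f g : (Fin d → ℝ) → ℝ) (α : ℝ) (v : (Fin d → ℝ) → ℝ) : ℝ :=
  (∫ x in Ω, (lap d v x + f x)^2) + α * ∫ x, (v x - g x)^2 ∂σm


lemma lap_sub_at {d : ℕ} {u v : (Fin d → ℝ) → ℝ} {x : Fin d → ℝ}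
    (hu : ContDiffAt ℝ 2 u x) (hv : ContDiffAt ℝ 2 v x) :
    lap d (fun y => u y - v y) x = lap d u x - lap d v x := by
  unfold lap
  rw [← Finset.sum_sub_distrib]
  refine Finset.sum_congr rfl fun i _ => ?_
  have heq : pder d i (fun y => u y - v y) =ᶠ[nhds x]
      fun y => pder d i u y - pder d i v y := by
    filter_upwards [hu.eventually (by norm_num), hv.eventually (by norm_num)]
      with y hy1 hy2
    unfold pder
    rw [fderiv_fun_sub (hy1.differentiableAt (by norm_num)) (hy2.differentiableAt (by norm_num))]
    rfl
  have hdu : DifferentiableAt ℝ (pder d i u) x := by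
    have h1 : ContDiffAt ℝ 1 (fderiv ℝ u) x := hu.fderiv_right (by norm_num)
    exact (h1.differentiableAt one_ne_zero).clm_apply (differentiableAt_const _)
  have hdv : DifferentiableAt ℝ (pder d i v) x := by
    have h1 : ContDiffAt ℝ 1 (fderiv ℝ v) x := hv.fderiv_right (by norm_num)
    exact (h1.differentiableAt one_ne_zero).clm_apply (differentiableAt_const _)
  show fderiv ℝ (pder d i (fun y => u y - v y)) x (Pi.single i 1) = _
  rw [heq.fderiv_eq, fderiv_fun_sub hdu hdv]
  rfl

/-- Stability of the Poisson problem implies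
`‖u − u_θ‖²_{L²(Ω)} ≤ 2 c² max(1, 1/α) L(u_θ)`. -/
theorem pinn_L2_bound_by_loss {d : ℕ} (hd : 1 ≤ d)
    (Ω : Set (Fin d → ℝ)) (hΩo : IsOpen Ω) (hΩb : Bornology.IsBounded Ω)
    (σm : Measure (Fin d → ℝ)) (hσfin : IsFiniteMeasure σm)
    (hσsupp : σm (frontier Ω)ᶜ = 0)
    (f g : (Fin d → ℝ) → ℝ)
    (hfc : ContinuousOn f Ω) (hgc : ContinuousOn g (frontier Ω))
    (Mf Mg : ℝ) (hf : ∀ x ∈ Ω, |f x| ≤ Mf) (hg : ∀ x ∈ frontier Ω, |g x| ≤ Mg)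
    (α : ℝ) (hα : 0 < α)
    (c : ℝ) (hc : 0 < c)
    (hstab : ∀ w, CkNear d 2 (closure Ω) w →
      Real.sqrt (∫ x in Ω, (w x)^2)
        ≤ c * (Real.sqrt (∫ x in Ω, (lap d w x)^2) + Real.sqrt (∫ x, (w x)^2 ∂σm)))
    (u uθ : (Fin d → ℝ) → ℝ)
    (hu : CkNear d 2 (closure Ω) u) (huθ : CkNear d 2 (closure Ω) uθ)
    (hpde : ∀ x ∈ Ω, - lap d u x = f x) (hbc : ∀ᵐ x ∂σm, u x = g x) :
    (∫ x in Ω, (u x - uθ x)^2) ≤ 2 * c^2 * max 1 (1/α) * pinnLoss d Ω σm f g α uθ := by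

  obtain ⟨Vu, hVuo, hVuS, hVuC⟩ := hu
  obtain ⟨Vv, hVvo, hVvS, hVvC⟩ := huθ
  set w : (Fin d → ℝ) → ℝ := fun y => u y - uθ y with hw
  have hwC : CkNear d 2 (closure Ω) w := by
    refine ⟨Vu ∩ Vv, hVuo.inter hVvo, subset_inter hVuS hVvS, ?_⟩
    exact (hVuC.mono inter_subset_left).sub (hVvC.mono inter_subset_right)
  have hcu : ∀ x ∈ Ω, ContDiffAt ℝ 2 u x := fun x hx =>
    (hVuC.contDiffAt (hVuo.mem_nhds (hVuS (subset_closure hx))))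
  have hcv : ∀ x ∈ Ω, ContDiffAt ℝ 2 uθ x := fun x hx =>
    (hVvC.contDiffAt (hVvo.mem_nhds (hVvS (subset_closure hx))))
  have hB : (∫ x in Ω, (lap d w x)^2) = ∫ x in Ω, (lap d uθ x + f x)^2 := by
    refine setIntegral_congr_fun hΩo.measurableSet fun x hx => ?_
    have : lap d w x = lap d u x - lap d uθ x := lap_sub_at (hcu x hx) (hcv x hx)
    rw [this, ← hpde x hx]
    ring
  have hC : (∫ x, (w x)^2 ∂σm) = ∫ x, (uθ x - g x)^2 ∂σm := by
    refine integral_congr_ae ?_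
    filter_upwards [hbc] with x hx
    simp only [hw]
    rw [hx]; ring
  have hst := hstab w hwC
  rw [hB, hC] at hst
  set A := ∫ x in Ω, (w x)^2 with hA
  set B := ∫ x in Ω, (lap d uθ x + f x)^2 with hBdef
  set C := ∫ x, (uθ x - g x)^2 ∂σm with hCdef
  have hA0 : 0 ≤ A := integral_nonneg fun x => sq_nonneg _
  have hB0 : 0 ≤ B := integral_nonneg fun x => sq_nonneg _
  have hC0 : 0 ≤ C := integral_nonneg fun x => sq_nonneg _
  have hsA : Real.sqrt A ^ 2 = A := Real.sq_sqrt hA0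
  have hsB : Real.sqrt B ^ 2 = B := Real.sq_sqrt hB0
  have hsC : Real.sqrt C ^ 2 = C := Real.sq_sqrt hC0
  have hA2 : A ≤ 2 * c^2 * (B + C) := by
    have h1 : Real.sqrt A ^ 2 ≤ (c * (Real.sqrt B + Real.sqrt C))^2 := by
      apply pow_le_pow_left₀ (Real.sqrt_nonneg _) hst
    nlinarith [sq_nonneg (Real.sqrt B - Real.sqrt C), Real.sqrt_nonneg A,
      Real.sqrt_nonneg B, Real.sqrt_nonneg C]
  have hmax1 : (1:ℝ) ≤ max 1 (1/α) := le_max_left _ _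
  have hmax2 : 1/α ≤ max 1 (1/α) := le_max_right _ _
  have hmaxα : 1 ≤ max 1 (1/α) * α := (div_le_iff₀ hα).mp hmax2
  have hloss : pinnLoss d Ω σm f g α uθ = B + α * C := rfl
  rw [hloss]
  have hkey : B + C ≤ max 1 (1/α) * (B + α * C) := by
    have h1 : B ≤ max 1 (1/α) * B := le_mul_of_one_le_left hB0 hmax1
    have h2 : C ≤ max 1 (1/α) * (α * C) := by
      calc C = 1 * C := (one_mul C).symm
        _ ≤ (max 1 (1/α) * α) * C := mul_le_mul_of_nonneg_right hmaxα hC0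
        _ = max 1 (1/α) * (α * C) := by ring
    nlinarith
  calc A ≤ 2 * c^2 * (B + C) := hA2
    _ ≤ 2 * c^2 * (max 1 (1/α) * (B + α * C)) := by
        apply mul_le_mul_of_nonneg_left hkey; positivity
    _ = 2 * c^2 * max 1 (1/α) * (B + α * C) := by ring


end
end

section
/- Let ν be a probability measure on a measurable space S, let X_1,…,X_n be i.i.d. S-valued random variables with law ν, and let ω_1,…,ω_n be i.i.d. Rademacher random variables independent of (X_1,…,X_n). Let H be a countable nonempty family of measurable functions S → ℝ that is uniformly bounded by some M < ∞. Then E[ sup_{h∈H} ( ∫_S h dν − (1/n) Σ_{k=1}^n h(X_k) ) ] ≤ 2 E[ sup_{h∈H} (1/n) Σ_{k=1}^n ω_k h(X_k) ], i.e. the expected uniform deviation of the empirical mean from the true mean over H is at most twice the Rademacher complexity R_n(H). -/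
open MeasureTheory Set

noncomputable section

/-- The value `±1` of a Rademacher sign encoded as a Boolean. -/
def sgn (b : Bool) : ℝ := if b then 1 else -1

/-- Joint law of `n` i.i.d. samples from `ν` together with `n` independent
uniform Rademacher signs. -/
def radMeasure {S : Type*} [MeasurableSpace S] (ν : Measure S) (n : ℕ) :
    Measure ((Fin n → S) × (Fin n → Bool)) :=
  (Measure.pi fun _ => ν).prod (Measure.pi fun _ => (PMF.uniformOfFintype Bool).toMeasure)

/-- The Rademacher complexity `R_n(F)`. -/
def radComplexity {S : Type*} [MeasurableSpace S] (ν : Measure S) (n : ℕ)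
    (F : Set (S → ℝ)) : ℝ :=
  ∫ p, sSup ((fun v => (n : ℝ)⁻¹ * ∑ j, sgn (p.2 j) * v (p.1 j)) '' F) ∂(radMeasure ν n)

/-! ### Auxiliary lemmas -/

lemma abs_sgn (b : Bool) : |sgn b| = 1 := by cases b <;> simp [sgn]

lemma sgn_not (b : Bool) : sgn (!b) = - sgn b := by cases b <;> simp [sgn]

lemma measurable_sgn : Measurable sgn := measurable_from_top

lemma bddAbove_of_le {g : ℕ → ℝ} {C : ℝ} (h : ∀ i, g i ≤ C) : BddAbove (Set.range g) :=
  ⟨C, by rintro _ ⟨i, rfl⟩; exact h i⟩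

lemma abs_iSup_le {g : ℕ → ℝ} {C : ℝ} (h : ∀ i, |g i| ≤ C) : |⨆ i, g i| ≤ C := by
  rw [abs_le]
  constructor
  · exact le_trans (abs_le.1 (h 0)).1
      (le_ciSup (bddAbove_of_le fun i => (abs_le.1 (h i)).2) 0)
  · exact ciSup_le fun i => (abs_le.1 (h i)).2

lemma integrable_of_bdd {α : Type*} [MeasurableSpace α] {μ : Measure α} [IsFiniteMeasure μ]
    {g : α → ℝ} (hm : Measurable g) {C : ℝ} (h : ∀ x, |g x| ≤ C) : Integrable g μ :=
  (integrable_const C).mono' hm.aestronglyMeasurable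
    (Filter.Eventually.of_forall fun x => by rw [Real.norm_eq_abs]; exact h x)

lemma abs_inv_mul_sum_le {n : ℕ} {C : ℝ} (hC : 0 ≤ C) {g : Fin n → ℝ} (hg : ∀ k, |g k| ≤ C) :
    |(n : ℝ)⁻¹ * ∑ k, g k| ≤ C := by
  rw [abs_mul, abs_inv, Nat.abs_cast]
  calc (n : ℝ)⁻¹ * |∑ k, g k| ≤ (n : ℝ)⁻¹ * (n * C) := by
        refine mul_le_mul_of_nonneg_left ?_ (inv_nonneg.2 (Nat.cast_nonneg n))
        refine (Finset.abs_sum_le_sum_abs _ _).trans ?_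
        calc ∑ k, |g k| ≤ ∑ _k : Fin n, C := Finset.sum_le_sum fun k _ => hg k
          _ = n * C := by simp [Finset.sum_const, Finset.card_univ, nsmul_eq_mul]
    _ ≤ C := by
        rcases Nat.eq_zero_or_pos n with h | h
        · simp [h, hC]
        · have hne : (n : ℝ) ≠ 0 := Nat.cast_ne_zero.2 h.ne'
          rw [← mul_assoc, inv_mul_cancel₀ hne, one_mul]

lemma pi_map_eval {S : Type*} [MeasurableSpace S] (ν : Measure S) [IsProbabilityMeasure ν]
    {n : ℕ} (k : Fin n) : (Measure.pi fun _ : Fin n => ν).map (fun Y => Y k) = ν := by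
  refine Measure.ext fun s hs => ?_
  rw [Measure.map_apply (measurable_pi_apply k) hs]
  have hpre : (fun Y : Fin n → S => Y k) ⁻¹' s
      = Set.pi Set.univ (fun j => if j = k then s else Set.univ) := by
    ext Y
    simp only [mem_preimage, Set.mem_pi, mem_univ, true_implies]
    constructor
    · intro h j
      by_cases hj : j = k
      · subst hj; simp [h]
      · simp [hj]
    · intro h
      simpa using h k
  rw [hpre, Measure.pi_pi]
  have : ∀ j : Fin n, ν (if j = k then s else Set.univ) = if j = k then ν s else 1 := by
    intro j; split <;> simp
  simp_rw [this]
  rw [Finset.prod_ite_eq' Finset.univ k (fun _ => ν s)]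
  simp

lemma bool_not_mp : MeasurePreserving (fun b => !b) (PMF.uniformOfFintype Bool).toMeasure
    (PMF.uniformOfFintype Bool).toMeasure := by
  refine ⟨measurable_from_top, ?_⟩
  have h : (PMF.uniformOfFintype Bool).map (fun b => !b) = PMF.uniformOfFintype Bool := by
    refine PMF.ext fun b => ?_
    rw [PMF.map_apply]
    rw [tsum_bool]
    cases b <;> simp [PMF.uniformOfFintype_apply]
  exact (PMF.toMeasure_map (f := fun b => !b) (PMF.uniformOfFintype Bool)
    measurable_from_top).trans (by rw [h])

/-- Integral over a product of a function of the second coordinate. -/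
lemma integral_comp_snd {α β : Type*} [MeasurableSpace α] [MeasurableSpace β]
    (μ : Measure α) (ρ : Measure β) [IsProbabilityMeasure μ] [IsProbabilityMeasure ρ]
    {f : β → ℝ} (hf : AEStronglyMeasurable f ρ) :
    ∫ p : α × β, f p.2 ∂(μ.prod ρ) = ∫ y, f y ∂ρ := by
  have h : (μ.prod ρ).map Prod.snd = ρ := by
    rw [Measure.map_snd_prod, measure_univ, one_smul]
  calc ∫ p : α × β, f p.2 ∂(μ.prod ρ)
      = ∫ y, f y ∂((μ.prod ρ).map Prod.snd) :=
        (integral_map measurable_snd.aemeasurable (by rwa [h])).symm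
    _ = ∫ y, f y ∂ρ := by rw [h]

/-- Integral over a product of a function of the first coordinate. -/
lemma integral_comp_fst {α β : Type*} [MeasurableSpace α] [MeasurableSpace β]
    (μ : Measure α) (ρ : Measure β) [IsProbabilityMeasure μ] [IsProbabilityMeasure ρ]
    {f : α → ℝ} (hf : AEStronglyMeasurable f μ) :
    ∫ p : α × β, f p.1 ∂(μ.prod ρ) = ∫ x, f x ∂μ := by
  have h : (μ.prod ρ).map Prod.fst = μ := by
    rw [Measure.map_fst_prod, measure_univ, one_smul]
  calc ∫ p : α × β, f p.1 ∂(μ.prod ρ)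
      = ∫ x, f x ∂((μ.prod ρ).map Prod.fst) :=
        (integral_map measurable_fst.aemeasurable (by rwa [h])).symm
    _ = ∫ x, f x ∂μ := by rw [h]

/-- Sign-dependent coordinatewise swapping preserves the two-sample measure. -/
lemma integral_comp_swapSigns {S : Type*} [MeasurableSpace S] (ν : Measure S)
    [IsProbabilityMeasure ν] {n : ℕ} (ε : Fin n → Bool)
    {g : ((Fin n → S) × (Fin n → S)) → ℝ}
    (hg : AEStronglyMeasurable g
      ((Measure.pi fun _ : Fin n => ν).prod (Measure.pi fun _ : Fin n => ν))) :
    (∫ p, g (fun k => if ε k then p.1 k else p.2 k, fun k => if ε k then p.2 k else p.1 k)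
        ∂((Measure.pi fun _ : Fin n => ν).prod (Measure.pi fun _ : Fin n => ν)))
      = ∫ p, g p ∂((Measure.pi fun _ : Fin n => ν).prod (Measure.pi fun _ : Fin n => ν)) := by
  have hτ : MeasurePreserving (fun (q : Fin n → S × S) k => if ε k then q k else (q k).swap)
      (Measure.pi fun _ : Fin n => ν.prod ν) (Measure.pi fun _ : Fin n => ν.prod ν) := by
    refine measurePreserving_pi _ _ (f := fun k (x : S × S) => if ε k then x else x.swap) ?_
    intro k
    cases hk : ε k
    · simp only [hk, Bool.false_eq_true, if_false]
      exact Measure.measurePreserving_swap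
    · simp only [hk, if_true]
      exact MeasurePreserving.id _
  have hΦ := measurePreserving_arrowProdEquivProdArrow S S (Fin n) (fun _ => ν) (fun _ => ν)
  have hT : MeasurePreserving
      (⇑(MeasurableEquiv.arrowProdEquivProdArrow S S (Fin n)) ∘
        (fun (q : Fin n → S × S) k => if ε k then q k else (q k).swap) ∘
        ⇑(MeasurableEquiv.arrowProdEquivProdArrow S S (Fin n)).symm)
      ((Measure.pi fun _ : Fin n => ν).prod (Measure.pi fun _ : Fin n => ν))
      ((Measure.pi fun _ : Fin n => ν).prod (Measure.pi fun _ : Fin n => ν)) :=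
    hΦ.comp (hτ.comp hΦ.symm)
  have hfun : ∀ p : (Fin n → S) × (Fin n → S),
      (⇑(MeasurableEquiv.arrowProdEquivProdArrow S S (Fin n)) ∘
        (fun (q : Fin n → S × S) k => if ε k then q k else (q k).swap) ∘
        ⇑(MeasurableEquiv.arrowProdEquivProdArrow S S (Fin n)).symm) p
      = (fun k => if ε k then p.1 k else p.2 k, fun k => if ε k then p.2 k else p.1 k) := by
    intro p
    refine Prod.ext ?_ ?_ <;> funext k <;> cases hk : ε k <;>
      simp [MeasurableEquiv.arrowProdEquivProdArrow, Equiv.arrowProdEquivProdArrow, hk]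
  calc (∫ p, g (fun k => if ε k then p.1 k else p.2 k, fun k => if ε k then p.2 k else p.1 k)
        ∂((Measure.pi fun _ : Fin n => ν).prod (Measure.pi fun _ : Fin n => ν)))
      = ∫ p, g ((⇑(MeasurableEquiv.arrowProdEquivProdArrow S S (Fin n)) ∘
        (fun (q : Fin n → S × S) k => if ε k then q k else (q k).swap) ∘
        ⇑(MeasurableEquiv.arrowProdEquivProdArrow S S (Fin n)).symm) p)
        ∂((Measure.pi fun _ : Fin n => ν).prod (Measure.pi fun _ : Fin n => ν)) := by
        simp_rw [hfun]
    _ = ∫ q, g q ∂(((Measure.pi fun _ : Fin n => ν).prod (Measure.pi fun _ : Fin n => ν)).map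
        (⇑(MeasurableEquiv.arrowProdEquivProdArrow S S (Fin n)) ∘
        (fun (q : Fin n → S × S) k => if ε k then q k else (q k).swap) ∘
        ⇑(MeasurableEquiv.arrowProdEquivProdArrow S S (Fin n)).symm)) :=
        (integral_map hT.measurable.aemeasurable (by rwa [hT.map_eq])).symm
    _ = _ := by rw [hT.map_eq]

set_option maxHeartbeats 2000000 in
/-- Symmetrization: the expected uniform deviation of the empirical mean from the true
mean over a countable uniformly bounded class `H` is at most twice the Rademacher
complexity `R_n(H)`. -/
theorem symmetrization {S : Type*} [MeasurableSpace S]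
    (ν : Measure S) (hν : IsProbabilityMeasure ν)
    (n : ℕ) (hn : 0 < n)
    (H : Set (S → ℝ)) (hHc : H.Countable) (hHne : H.Nonempty)
    (hHmeas : ∀ h ∈ H, Measurable h)
    (M : ℝ) (hHbd : ∀ h ∈ H, ∀ x, |h x| ≤ M) :
    (∫ X : Fin n → S,
        sSup ((fun h => (∫ s, h s ∂ν) - (n : ℝ)⁻¹ * ∑ k, h (X k)) '' H)
        ∂(Measure.pi fun _ => ν))
      ≤ 2 * radComplexity ν n H := by
  classical
  obtain ⟨e, he⟩ := hHc.exists_eq_range hHne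
  have hme : ∀ i, Measurable (e i) := fun i => hHmeas _ (he ▸ Set.mem_range_self i)
  have hbe : ∀ i x, |e i x| ≤ M := fun i x => hHbd _ (he ▸ Set.mem_range_self i) x
  have hSne : Nonempty S := by
    by_contra hS
    rw [not_nonempty_iff] at hS
    have h1 := hν.measure_univ
    rw [Set.univ_eq_empty_iff.2 hS, measure_empty] at h1
    exact zero_ne_one h1
  have hM : 0 ≤ M := le_trans (abs_nonneg _) (hbe 0 (Classical.arbitrary S))
  have hM2 : (0:ℝ) ≤ 2 * M := by linarith
  have himg : ∀ c : (S → ℝ) → ℝ, sSup (c '' H) = ⨆ i, c (e i) := by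
    intro c
    rw [he, ← Set.range_comp]
    exact sSup_range
  -- basic bounds
  have hbound_a : ∀ (i : ℕ) (ε : Fin n → Bool) (X : Fin n → S),
      |(n : ℝ)⁻¹ * ∑ k, sgn (ε k) * e i (X k)| ≤ M := by
    intro i ε X
    refine abs_inv_mul_sum_le hM fun k => ?_
    rw [abs_mul, abs_sgn, one_mul]; exact hbe i _
  have hbound_d : ∀ (i : ℕ) (X Y : Fin n → S),
      |(n : ℝ)⁻¹ * ∑ k, (e i (Y k) - e i (X k))| ≤ 2 * M := by
    intro i X Y
    refine abs_inv_mul_sum_le hM2 fun k => ?_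
    calc |e i (Y k) - e i (X k)| ≤ |e i (Y k)| + |e i (X k)| := abs_sub _ _
      _ ≤ 2 * M := by have h1 := hbe i (Y k); have h2 := hbe i (X k); linarith
  have hbound_de : ∀ (ε : Fin n → Bool) (i : ℕ) (X Y : Fin n → S),
      |(n : ℝ)⁻¹ * ∑ k, sgn (ε k) * (e i (Y k) - e i (X k))| ≤ 2 * M := by
    intro ε i X Y
    refine abs_inv_mul_sum_le hM2 fun k => ?_
    rw [abs_mul, abs_sgn, one_mul]
    calc |e i (Y k) - e i (X k)| ≤ |e i (Y k)| + |e i (X k)| := abs_sub _ _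
      _ ≤ 2 * M := by have h1 := hbe i (Y k); have h2 := hbe i (X k); linarith
  have hE : ∀ i, |∫ s, e i s ∂ν| ≤ M := by
    intro i
    have h := norm_integral_le_of_norm_le_const (μ := ν) (f := e i) (C := M)
      (Filter.Eventually.of_forall fun x => by rw [Real.norm_eq_abs]; exact hbe i x)
    rwa [Real.norm_eq_abs, probReal_univ, mul_one] at h
  have hbound_f : ∀ (i : ℕ) (X : Fin n → S),
      |(∫ s, e i s ∂ν) - (n : ℝ)⁻¹ * ∑ k, e i (X k)| ≤ 2 * M := by
    intro i X
    have h2 : |(n : ℝ)⁻¹ * ∑ k, e i (X k)| ≤ M := abs_inv_mul_sum_le hM fun k => hbe i _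
    calc |(∫ s, e i s ∂ν) - (n : ℝ)⁻¹ * ∑ k, e i (X k)|
        ≤ |∫ s, e i s ∂ν| + |(n : ℝ)⁻¹ * ∑ k, e i (X k)| := abs_sub _ _
      _ ≤ 2 * M := by have h1 := hE i; linarith
  -- measurability
  have hmSum : ∀ i, Measurable fun X : Fin n → S => (n : ℝ)⁻¹ * ∑ k, e i (X k) := fun i =>
    (Finset.univ.measurable_sum fun k _ => (hme i).comp (measurable_pi_apply k)).const_mul _
  have hmf : Measurable fun X : Fin n → S =>
      ⨆ i, ((∫ s, e i s ∂ν) - (n : ℝ)⁻¹ * ∑ k, e i (X k)) :=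
    Measurable.iSup fun i => measurable_const.sub (hmSum i)
  have hmA : Measurable fun p : (Fin n → S) × (Fin n → Bool) =>
      ⨆ i, (n : ℝ)⁻¹ * ∑ j, sgn (p.2 j) * e i (p.1 j) :=
    Measurable.iSup fun i => ((Finset.univ.measurable_sum fun j _ =>
      ((measurable_sgn.comp ((measurable_pi_apply j).comp measurable_snd)).mul
        ((hme i).comp ((measurable_pi_apply j).comp measurable_fst)))).const_mul _)
  have hmAe : ∀ ε : Fin n → Bool, Measurable fun X : Fin n → S =>
      ⨆ i, (n : ℝ)⁻¹ * ∑ j, sgn (ε j) * e i (X j) := fun ε =>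
    Measurable.iSup fun i => ((Finset.univ.measurable_sum fun j _ =>
      (((hme i).comp (measurable_pi_apply j)).const_mul _)).const_mul _)
  have hmD : Measurable fun p : (Fin n → S) × (Fin n → S) =>
      ⨆ i, (n : ℝ)⁻¹ * ∑ k, (e i (p.2 k) - e i (p.1 k)) :=
    Measurable.iSup fun i => ((Finset.univ.measurable_sum fun k _ =>
      (((hme i).comp ((measurable_pi_apply k).comp measurable_snd)).sub
        ((hme i).comp ((measurable_pi_apply k).comp measurable_fst)))).const_mul _)
  have hmDe : ∀ ε : Fin n → Bool, Measurable fun p : (Fin n → S) × (Fin n → S) =>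
      ⨆ i, (n : ℝ)⁻¹ * ∑ k, sgn (ε k) * (e i (p.2 k) - e i (p.1 k)) := fun ε =>
    Measurable.iSup fun i => ((Finset.univ.measurable_sum fun k _ =>
      ((((hme i).comp ((measurable_pi_apply k).comp measurable_snd)).sub
        ((hme i).comp ((measurable_pi_apply k).comp measurable_fst))).const_mul _)).const_mul _)
  -- integrability
  have hIntf : Integrable (fun X => ⨆ i, ((∫ s, e i s ∂ν) - (n : ℝ)⁻¹ * ∑ k, e i (X k)))
      (Measure.pi fun _ : Fin n => ν) :=
    integrable_of_bdd hmf fun X => abs_iSup_le fun i => hbound_f i X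
  have hIntD : Integrable (fun p : (Fin n → S) × (Fin n → S) =>
      ⨆ i, (n : ℝ)⁻¹ * ∑ k, (e i (p.2 k) - e i (p.1 k)))
      ((Measure.pi fun _ : Fin n => ν).prod (Measure.pi fun _ : Fin n => ν)) :=
    integrable_of_bdd hmD fun p => abs_iSup_le fun i => hbound_d i p.1 p.2
  have hIntDe : ∀ ε : Fin n → Bool, Integrable (fun p : (Fin n → S) × (Fin n → S) =>
      ⨆ i, (n : ℝ)⁻¹ * ∑ k, sgn (ε k) * (e i (p.2 k) - e i (p.1 k)))
      ((Measure.pi fun _ : Fin n => ν).prod (Measure.pi fun _ : Fin n => ν)) := fun ε =>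
    integrable_of_bdd (hmDe ε) fun p => abs_iSup_le fun i => hbound_de ε i p.1 p.2
  have hIntA : Integrable (fun p : (Fin n → S) × (Fin n → Bool) =>
      ⨆ i, (n : ℝ)⁻¹ * ∑ j, sgn (p.2 j) * e i (p.1 j))
      ((Measure.pi fun _ : Fin n => ν).prod
        (Measure.pi fun _ : Fin n => (PMF.uniformOfFintype Bool).toMeasure)) :=
    integrable_of_bdd hmA fun p => abs_iSup_le fun i => hbound_a i p.2 p.1
  have hIntAe : ∀ ε : Fin n → Bool, Integrable
      (fun X : Fin n → S => ⨆ i, (n : ℝ)⁻¹ * ∑ j, sgn (ε j) * e i (X j))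
      (Measure.pi fun _ : Fin n => ν) := fun ε =>
    integrable_of_bdd (hmAe ε) fun X => abs_iSup_le fun i => hbound_a i ε X
  -- empirical mean has the right expectation
  have hEmp : ∀ i, (∫ Y, ((n : ℝ)⁻¹ * ∑ k, e i (Y k)) ∂(Measure.pi fun _ : Fin n => ν))
      = ∫ s, e i s ∂ν := by
    intro i
    rw [integral_const_mul]
    rw [integral_finset_sum (f := fun (k : Fin n) (Y : Fin n → S) => e i (Y k)) Finset.univ
      fun k _ =>
      integrable_of_bdd ((hme i).comp (measurable_pi_apply k)) (fun Y => hbe i (Y k))]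
    have hco : ∀ k : Fin n,
        (∫ Y, e i (Y k) ∂(Measure.pi fun _ : Fin n => ν)) = ∫ s, e i s ∂ν := by
      intro k
      conv_rhs => rw [← pi_map_eval ν k]
      rw [integral_map (measurable_pi_apply k).aemeasurable (hme i).aestronglyMeasurable]
    simp_rw [hco]
    rw [Finset.sum_const, Finset.card_univ, Fintype.card_fin, nsmul_eq_mul, ← mul_assoc,
      inv_mul_cancel₀ (Nat.cast_ne_zero.2 hn.ne' : (n : ℝ) ≠ 0), one_mul]
  -- Step A: pointwise comparison with the two-sample deviation
  have hstepA : ∀ X : Fin n → S,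
      (⨆ i, ((∫ s, e i s ∂ν) - (n : ℝ)⁻¹ * ∑ k, e i (X k)))
        ≤ ∫ Y, (⨆ i, (n : ℝ)⁻¹ * ∑ k, (e i (Y k) - e i (X k)))
            ∂(Measure.pi fun _ : Fin n => ν) := by
    intro X
    refine ciSup_le fun i => ?_
    have hsplit : ∀ Y : Fin n → S, (n : ℝ)⁻¹ * ∑ k, (e i (Y k) - e i (X k))
        = ((n : ℝ)⁻¹ * ∑ k, e i (Y k)) - ((n : ℝ)⁻¹ * ∑ k, e i (X k)) := by
      intro Y; rw [Finset.sum_sub_distrib, mul_sub]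
    have h1 : (∫ s, e i s ∂ν) - (n : ℝ)⁻¹ * ∑ k, e i (X k)
        = ∫ Y, ((n : ℝ)⁻¹ * ∑ k, (e i (Y k) - e i (X k)))
            ∂(Measure.pi fun _ : Fin n => ν) := by
      simp_rw [hsplit]
      rw [integral_sub (integrable_of_bdd (hmSum i)
          (fun Y => abs_inv_mul_sum_le hM fun k => hbe i _)) (integrable_const _),
        hEmp i, integral_const, probReal_univ, one_smul]
    rw [h1]
    refine integral_mono
      (integrable_of_bdd ((Finset.univ.measurable_sum fun k _ =>
        (((hme i).comp (measurable_pi_apply k)).sub measurable_const)).const_mul _)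
        (fun Y => hbound_d i X Y))
      (integrable_of_bdd (Measurable.iSup fun j => ((Finset.univ.measurable_sum fun k _ =>
          (((hme j).comp (measurable_pi_apply k)).sub measurable_const)).const_mul _))
        (fun Y => abs_iSup_le fun j => hbound_d j X Y))
      (fun Y => le_ciSup (bddAbove_of_le fun j => (abs_le.1 (hbound_d j X Y)).2) i)
  -- key symmetrization identity
  have hkey : ∀ ε : Fin n → Bool,
      (∫ p, (⨆ i, (n : ℝ)⁻¹ * ∑ k, sgn (ε k) * (e i (p.2 k) - e i (p.1 k)))
        ∂((Measure.pi fun _ : Fin n => ν).prod (Measure.pi fun _ : Fin n => ν)))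
      = ∫ p, (⨆ i, (n : ℝ)⁻¹ * ∑ k, (e i (p.2 k) - e i (p.1 k)))
        ∂((Measure.pi fun _ : Fin n => ν).prod (Measure.pi fun _ : Fin n => ν)) := by
    intro ε
    have h := integral_comp_swapSigns ν ε
      (g := fun p => ⨆ i, (n : ℝ)⁻¹ * ∑ k, (e i (p.2 k) - e i (p.1 k)))
      hmD.aestronglyMeasurable
    rw [← h]
    refine integral_congr_ae (Filter.Eventually.of_forall fun p => ?_)
    refine iSup_congr fun i => ?_
    congr 1
    refine Finset.sum_congr rfl fun k _ => ?_
    cases hk : ε k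
    · simp [sgn, hk, neg_one_mul, neg_sub]
    · simp [sgn, hk]
  -- Step C: splitting the symmetrized deviation
  have hstepC : ∀ ε : Fin n → Bool,
      (∫ p, (⨆ i, (n : ℝ)⁻¹ * ∑ k, sgn (ε k) * (e i (p.2 k) - e i (p.1 k)))
        ∂((Measure.pi fun _ : Fin n => ν).prod (Measure.pi fun _ : Fin n => ν)))
      ≤ (∫ X, (⨆ i, (n : ℝ)⁻¹ * ∑ j, sgn (ε j) * e i (X j)) ∂(Measure.pi fun _ : Fin n => ν))
        + ∫ X, (⨆ i, (n : ℝ)⁻¹ * ∑ j, sgn (!(ε j)) * e i (X j))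
            ∂(Measure.pi fun _ : Fin n => ν) := by
    intro ε
    have hpt : ∀ p : (Fin n → S) × (Fin n → S),
        (⨆ i, (n : ℝ)⁻¹ * ∑ k, sgn (ε k) * (e i (p.2 k) - e i (p.1 k)))
          ≤ (⨆ i, (n : ℝ)⁻¹ * ∑ k, sgn (ε k) * e i (p.2 k))
            + ⨆ i, (n : ℝ)⁻¹ * ∑ k, sgn (!(ε k)) * e i (p.1 k) := by
      intro p
      refine ciSup_le fun i => ?_
      have hsplit : (n : ℝ)⁻¹ * ∑ k, sgn (ε k) * (e i (p.2 k) - e i (p.1 k))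
          = ((n : ℝ)⁻¹ * ∑ k, sgn (ε k) * e i (p.2 k))
            + (n : ℝ)⁻¹ * ∑ k, sgn (!(ε k)) * e i (p.1 k) := by
        have hterm : ∀ k, sgn (ε k) * (e i (p.2 k) - e i (p.1 k))
            = sgn (ε k) * e i (p.2 k) + sgn (!(ε k)) * e i (p.1 k) := fun k => by
          rw [sgn_not]; ring
        simp_rw [hterm]
        rw [Finset.sum_add_distrib, mul_add]
      rw [hsplit]
      exact add_le_add
        (le_ciSup (bddAbove_of_le fun j => (abs_le.1 (hbound_a j ε p.2)).2) i)
        (le_ciSup (bddAbove_of_le fun j => (abs_le.1 (hbound_a j (fun k => !(ε k)) p.1)).2) i)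
    have hint1 : Integrable (fun p : (Fin n → S) × (Fin n → S) =>
        ⨆ i, (n : ℝ)⁻¹ * ∑ k, sgn (ε k) * e i (p.2 k))
        ((Measure.pi fun _ : Fin n => ν).prod (Measure.pi fun _ : Fin n => ν)) :=
      integrable_of_bdd (Measurable.iSup fun i => ((Finset.univ.measurable_sum fun k _ =>
          (((hme i).comp ((measurable_pi_apply k).comp measurable_snd)).const_mul _)).const_mul _))
        (fun p => abs_iSup_le fun i => hbound_a i ε p.2)
    have hint2 : Integrable (fun p : (Fin n → S) × (Fin n → S) =>
        ⨆ i, (n : ℝ)⁻¹ * ∑ k, sgn (!(ε k)) * e i (p.1 k))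
        ((Measure.pi fun _ : Fin n => ν).prod (Measure.pi fun _ : Fin n => ν)) :=
      integrable_of_bdd (Measurable.iSup fun i => ((Finset.univ.measurable_sum fun k _ =>
          (((hme i).comp ((measurable_pi_apply k).comp measurable_fst)).const_mul _)).const_mul _))
        (fun p => abs_iSup_le fun i => hbound_a i (fun k => !(ε k)) p.1)
    refine (integral_mono (hIntDe ε) (hint1.add hint2) hpt).trans_eq ?_
    simp only [Pi.add_apply]
    rw [integral_add hint1 hint2,
      integral_comp_snd _ _ (hmAe ε).aestronglyMeasurable,
      integral_comp_fst _ _ (hmAe (fun k => !(ε k))).aestronglyMeasurable]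
  -- notation for the inner Rademacher average
  have hflip : MeasurePreserving (fun ε : Fin n → Bool => fun k => !(ε k))
      (Measure.pi fun _ : Fin n => (PMF.uniformOfFintype Bool).toMeasure)
      (Measure.pi fun _ : Fin n => (PMF.uniformOfFintype Bool).toMeasure) :=
    measurePreserving_pi _ _ (fun _ => bool_not_mp)
  have hG : Integrable (fun ε : Fin n → Bool =>
      ∫ X, (⨆ i, (n : ℝ)⁻¹ * ∑ j, sgn (ε j) * e i (X j)) ∂(Measure.pi fun _ : Fin n => ν))
      (Measure.pi fun _ : Fin n => (PMF.uniformOfFintype Bool).toMeasure) :=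
    hIntA.integral_prod_right
  have hGflip : Integrable (fun ε : Fin n → Bool =>
      ∫ X, (⨆ i, (n : ℝ)⁻¹ * ∑ j, sgn (!(ε j)) * e i (X j)) ∂(Measure.pi fun _ : Fin n => ν))
      (Measure.pi fun _ : Fin n => (PMF.uniformOfFintype Bool).toMeasure) :=
    (hflip.integrable_comp hG.aestronglyMeasurable).2 hG
  have hflipint_eq :
      (∫ ε, (∫ X, (⨆ i, (n : ℝ)⁻¹ * ∑ j, sgn (!(ε j)) * e i (X j))
          ∂(Measure.pi fun _ : Fin n => ν))
        ∂(Measure.pi fun _ : Fin n => (PMF.uniformOfFintype Bool).toMeasure))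
      = ∫ ε, (∫ X, (⨆ i, (n : ℝ)⁻¹ * ∑ j, sgn (ε j) * e i (X j))
          ∂(Measure.pi fun _ : Fin n => ν))
        ∂(Measure.pi fun _ : Fin n => (PMF.uniformOfFintype Bool).toMeasure) := by
    have h2 := integral_map (μ := Measure.pi fun _ : Fin n => (PMF.uniformOfFintype Bool).toMeasure)
      (f := fun ε : Fin n → Bool =>
        ∫ X, (⨆ i, (n : ℝ)⁻¹ * ∑ j, sgn (ε j) * e i (X j)) ∂(Measure.pi fun _ : Fin n => ν))
      hflip.measurable.aemeasurable
      (by rw [hflip.map_eq]; exact hG.aestronglyMeasurable)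
    rw [hflip.map_eq] at h2
    exact h2.symm
  -- the Rademacher complexity as an iterated integral
  have hRad : radComplexity ν n H
      = ∫ ε, (∫ X, (⨆ i, (n : ℝ)⁻¹ * ∑ j, sgn (ε j) * e i (X j))
          ∂(Measure.pi fun _ : Fin n => ν))
        ∂(Measure.pi fun _ : Fin n => (PMF.uniformOfFintype Bool).toMeasure) := by
    rw [radComplexity, radMeasure]
    simp_rw [himg]
    rw [integral_prod _ hIntA]
    exact integral_integral_swap
      (f := fun (X : Fin n → S) (ε : Fin n → Bool) =>
        ⨆ i, (n : ℝ)⁻¹ * ∑ j, sgn (ε j) * e i (X j)) hIntA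
  -- assemble everything
  simp_rw [himg]
  calc (∫ X, (⨆ i, ((∫ s, e i s ∂ν) - (n : ℝ)⁻¹ * ∑ k, e i (X k)))
        ∂(Measure.pi fun _ : Fin n => ν))
      ≤ ∫ X, (∫ Y, (⨆ i, (n : ℝ)⁻¹ * ∑ k, (e i (Y k) - e i (X k)))
          ∂(Measure.pi fun _ : Fin n => ν)) ∂(Measure.pi fun _ : Fin n => ν) :=
        integral_mono hIntf hIntD.integral_prod_left hstepA
    _ = ∫ p, (⨆ i, (n : ℝ)⁻¹ * ∑ k, (e i (p.2 k) - e i (p.1 k)))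
          ∂((Measure.pi fun _ : Fin n => ν).prod (Measure.pi fun _ : Fin n => ν)) :=
        (integral_prod _ hIntD).symm
    _ = ∫ ε, (∫ p, (⨆ i, (n : ℝ)⁻¹ * ∑ k, sgn (ε k) * (e i (p.2 k) - e i (p.1 k)))
          ∂((Measure.pi fun _ : Fin n => ν).prod (Measure.pi fun _ : Fin n => ν)))
        ∂(Measure.pi fun _ : Fin n => (PMF.uniformOfFintype Bool).toMeasure) := by
        rw [show (fun ε : Fin n → Bool =>
            ∫ p, (⨆ i, (n : ℝ)⁻¹ * ∑ k, sgn (ε k) * (e i (p.2 k) - e i (p.1 k)))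
              ∂((Measure.pi fun _ : Fin n => ν).prod (Measure.pi fun _ : Fin n => ν)))
          = fun _ => ∫ p, (⨆ i, (n : ℝ)⁻¹ * ∑ k, (e i (p.2 k) - e i (p.1 k)))
              ∂((Measure.pi fun _ : Fin n => ν).prod (Measure.pi fun _ : Fin n => ν))
          from funext hkey]
        rw [integral_const, probReal_univ, one_smul]
    _ ≤ ∫ ε, ((∫ X, (⨆ i, (n : ℝ)⁻¹ * ∑ j, sgn (ε j) * e i (X j))
            ∂(Measure.pi fun _ : Fin n => ν))
          + ∫ X, (⨆ i, (n : ℝ)⁻¹ * ∑ j, sgn (!(ε j)) * e i (X j))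
            ∂(Measure.pi fun _ : Fin n => ν))
        ∂(Measure.pi fun _ : Fin n => (PMF.uniformOfFintype Bool).toMeasure) := by
        refine integral_mono ?_ (hG.add hGflip) hstepC
        rw [show (fun ε : Fin n → Bool =>
            ∫ p, (⨆ i, (n : ℝ)⁻¹ * ∑ k, sgn (ε k) * (e i (p.2 k) - e i (p.1 k)))
              ∂((Measure.pi fun _ : Fin n => ν).prod (Measure.pi fun _ : Fin n => ν)))
          = fun _ => ∫ p, (⨆ i, (n : ℝ)⁻¹ * ∑ k, (e i (p.2 k) - e i (p.1 k)))
              ∂((Measure.pi fun _ : Fin n => ν).prod (Measure.pi fun _ : Fin n => ν))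
          from funext hkey]
        exact integrable_const _
    _ = 2 * radComplexity ν n H := by
        rw [integral_add hG hGflip, hflipint_eq, hRad]; ring

end
end
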